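/- Let f : ℕ → ℝ_{>0} satisfy f(n) → 0 and Σ f(n) = ∞. Then the filter dual to the summable ideal I = {A ⊆ ℕ : Σ_{n∈A} f(n) < ∞} is a P⁺-filter which is not rapid⁺. -/
import Mathlib


/-- The filter dual to the summable ideal of `f`, as a family of subsets of ℕ:
`A` belongs to it iff `f` is summable on the complement of `A`. -/
def summableFilter (f : ℕ → ℝ) : Set (Set ℕ) :=
  {A : Set ℕ | Summable fun n : ↑(Aᶜ) => f n}

/-- A set is `G`-stationary if its complement is not in `G`. -/
def GStat (G : Set (Set ℕ)) (A : Set ℕ) : Prop := Aᶜ ∉ G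

/-- `G` is a P⁺-filter. -/
def GPPlus (G : Set (Set ℕ)) : Prop :=
  ∀ A : ℕ → Set ℕ, (∀ k, GStat G (A k)) → Antitone A →
    ∃ B : Set ℕ, GStat G B ∧ ∀ k, (B \ A k).Finite

/-- `G` is rapid⁺. -/
def GRapidPlus (G : Set (Set ℕ)) : Prop :=
  ∀ I : Set ℕ, GStat G I → ∀ g : ℕ → ℕ, StrictMono g →
    ∃ B ⊆ I, GStat G B ∧ ∀ n, g n ≤ Nat.nth (· ∈ B) n

private lemma gstat_iff (f : ℕ → ℝ) (A : Set ℕ) :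
    GStat (summableFilter f) A ↔ ¬ Summable (A.indicator f) := by
  unfold GStat summableFilter
  rw [Set.mem_setOf_eq, compl_compl]
  exact not_congr summable_subtype_iff_indicator

private lemma exists_block (f : ℕ → ℝ) (hpos : ∀ n, 0 < f n) (A : Set ℕ)
    (hA : ¬ Summable (A.indicator f)) (N : ℕ) :
    ∃ F : Finset ℕ, ↑F ⊆ A ∧ (∀ m ∈ F, N ≤ m) ∧ 1 ≤ ∑ i ∈ F, f i := by
  classical
  set A' : Set ℕ := A ∩ {n | N ≤ n} with hA'def
  have hA' : ¬ Summable (A'.indicator f) := by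
    intro hs
    apply hA
    have h2 : Summable ((A ∩ {n | n < N}).indicator f) := by
      apply summable_of_ne_finset_zero (s := Finset.range N)
      intro b hb
      have : b ∉ A ∩ {n | n < N} := by
        intro hmem
        exact hb (Finset.mem_range.mpr hmem.2)
      exact Set.indicator_of_notMem this f
    have heq : A.indicator f = A'.indicator f + (A ∩ {n | n < N}).indicator f := by
      funext n
      by_cases hn : n ∈ A
      · by_cases hN : N ≤ n
        · have h1 : n ∈ A' := ⟨hn, hN⟩
          have h2' : n ∉ A ∩ {n | n < N} := fun h => absurd h.2 (not_lt.mpr hN)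
          simp [Set.indicator_of_mem hn, Set.indicator_of_mem h1,
            Set.indicator_of_notMem h2']
        · have h1 : n ∉ A' := fun h => hN h.2
          have h2' : n ∈ A ∩ {n | n < N} := ⟨hn, not_le.mp hN⟩
          simp [Set.indicator_of_mem hn, Set.indicator_of_notMem h1,
            Set.indicator_of_mem h2']
      · have h1 : n ∉ A' := fun h => hn h.1
        have h2' : n ∉ A ∩ {n | n < N} := fun h => hn h.1
        simp [Set.indicator_of_notMem hn, Set.indicator_of_notMem h1,
          Set.indicator_of_notMem h2']
    rw [heq]
    exact hs.add h2
  have hnn : ∀ n, 0 ≤ A'.indicator f n :=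
    fun n => Set.indicator_nonneg (fun m _ => (hpos m).le) n
  have htend := (not_summable_iff_tendsto_nat_atTop_of_nonneg hnn).mp hA'
  obtain ⟨n, hn⟩ := (htend.eventually_ge_atTop 1).exists
  refine ⟨(Finset.range n).filter (· ∈ A'), ?_, ?_, ?_⟩
  · intro x hx
    simp only [Finset.coe_filter, Set.mem_setOf_eq] at hx
    exact hx.2.1
  · intro m hm
    simp only [Finset.mem_filter] at hm
    exact hm.2.2
  · calc (1 : ℝ) ≤ ∑ i ∈ Finset.range n, A'.indicator f i := hn
      _ = ∑ i ∈ (Finset.range n).filter (· ∈ A'), f i := by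
          rw [Finset.sum_filter]
          exact Finset.sum_congr rfl fun i _ => by
            by_cases h : i ∈ A' <;> simp [Set.indicator_apply, h]

/-- Recursive construction of blocks together with a running threshold. -/
private noncomputable def blocks (pick : ℕ → ℕ → Finset ℕ) : ℕ → Finset ℕ × ℕ
  | 0 => ((pick 0 0), (pick 0 0).sup id + 1)
  | (k + 1) =>
    let p := blocks pick k
    ((pick (k + 1) p.2), max p.2 ((pick (k + 1) p.2).sup id + 1))

theorem stmt_4 (f : ℕ → ℝ) (hpos : ∀ n, 0 < f n)
    (hlim : Filter.Tendsto f Filter.atTop (nhds 0))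
    (hdiv : ¬ Summable f) :
    GPPlus (summableFilter f) ∧ ¬ GRapidPlus (summableFilter f) := by
  classical
  constructor
  · -- P⁺-filter
    intro A hstat hanti
    have hstat' : ∀ k, ¬ Summable ((A k).indicator f) :=
      fun k => (gstat_iff f (A k)).mp (hstat k)
    -- the picking function
    set pick : ℕ → ℕ → Finset ℕ :=
      fun k N => (exists_block f hpos (A k) (hstat' k) N).choose with hpick
    have pickspec : ∀ k N, ↑(pick k N) ⊆ A k ∧ (∀ m ∈ pick k N, N ≤ m) ∧
        1 ≤ ∑ i ∈ pick k N, f i :=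
      fun k N => (exists_block f hpos (A k) (hstat' k) N).choose_spec
    set F : ℕ → Finset ℕ := fun k => (blocks pick k).1 with hF
    set t : ℕ → ℕ := fun k => (blocks pick k).2 with ht
    have hFsub : ∀ k, ↑(F k) ⊆ A k := by
      intro k
      cases k with
      | zero => exact (pickspec 0 0).1
      | succ k => exact (pickspec (k + 1) (t k)).1
    have hFsum : ∀ k, 1 ≤ ∑ i ∈ F k, f i := by
      intro k
      cases k with
      | zero => exact (pickspec 0 0).2.2
      | succ k => exact (pickspec (k + 1) (t k)).2.2
    have hFlt : ∀ k, ∀ m ∈ F k, m < t k := by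
      intro k m hm
      have hsup : m ≤ (F k).sup id := Finset.le_sup (f := id) hm
      cases k with
      | zero => exact Nat.lt_succ_of_le hsup
      | succ k =>
        have : m < (F (k + 1)).sup id + 1 := Nat.lt_succ_of_le hsup
        exact lt_of_lt_of_le this (le_max_right _ _)
    have hFge : ∀ k, ∀ m ∈ F (k + 1), t k ≤ m :=
      fun k => (pickspec (k + 1) (t k)).2.1
    have htmono : Monotone t := by
      apply monotone_nat_of_le_succ
      intro k
      exact le_max_left _ _
    -- pairwise: elements of earlier blocks are smaller
    have hsep : ∀ j j', j < j' → ∀ m ∈ F j, ∀ m' ∈ F j', m < m' := by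
      intro j j' hjj' m hm m' hm'
      obtain ⟨k, rfl⟩ : ∃ k, j' = k + 1 := ⟨j' - 1, by omega⟩
      have h1 : m < t j := hFlt j m hm
      have h2 : t j ≤ t k := htmono (Nat.le_of_lt_succ hjj')
      exact lt_of_lt_of_le (lt_of_lt_of_le h1 h2) (hFge k m' hm')
    have hdisj : ∀ j j', j ≠ j' → Disjoint (F j) (F j') := by
      intro j j' hne
      rcases hne.lt_or_gt with h | h
      · exact Finset.disjoint_left.mpr fun m hm hm' =>
          lt_irrefl m (hsep j j' h m hm m hm')
      · exact Finset.disjoint_left.mpr fun m hm hm' =>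
          lt_irrefl m (hsep j' j h m hm' m hm)
    refine ⟨⋃ k, ↑(F k), ?_, ?_⟩
    · rw [gstat_iff]
      intro hs
      set B : Set ℕ := ⋃ k, ↑(F k) with hB
      have hub : ∀ m : ℕ, (m + 1 : ℝ) ≤ ∑' i, B.indicator f i := by
        intro m
        set T : Finset ℕ := (Finset.range (m + 1)).biUnion F with hT
        have hTsub : ∀ i ∈ T, i ∈ B := by
          intro i hi
          simp only [hT, Finset.mem_biUnion] at hi
          obtain ⟨j, _, hj⟩ := hi
          exact Set.mem_iUnion.mpr ⟨j, hj⟩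
        have hsum : ∑ i ∈ T, B.indicator f i = ∑ i ∈ T, f i :=
          Finset.sum_congr rfl fun i hi => Set.indicator_of_mem (hTsub i hi) f
        have hbig : (m + 1 : ℝ) ≤ ∑ i ∈ T, f i := by
          rw [hT, Finset.sum_biUnion (fun j _ j' _ hne => hdisj j j' hne)]
          calc (m + 1 : ℝ) = ∑ _j ∈ Finset.range (m + 1), (1 : ℝ) := by simp
            _ ≤ ∑ j ∈ Finset.range (m + 1), ∑ i ∈ F j, f i :=
                Finset.sum_le_sum fun j _ => hFsum j
        calc (m + 1 : ℝ) ≤ ∑ i ∈ T, f i := hbig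
          _ = ∑ i ∈ T, B.indicator f i := hsum.symm
          _ ≤ ∑' i, B.indicator f i := Summable.sum_le_tsum T
              (fun i _ => Set.indicator_nonneg (fun n _ => (hpos n).le) i) hs
      obtain ⟨m, hm⟩ := exists_nat_gt (∑' i, B.indicator f i)
      have := hub m
      have : (m : ℝ) + 1 ≤ (m : ℝ) := le_trans this hm.le
      linarith
    · intro k
      apply Set.Finite.subset ((Finset.range k).biUnion F).finite_toSet
      intro x hx
      obtain ⟨hxB, hxA⟩ := hx
      obtain ⟨j, hj⟩ := Set.mem_iUnion.mp hxB
      have hjk : j < k := by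
        by_contra h
        exact hxA (hanti (not_lt.mp h) (hFsub j hj))
      simp only [Finset.coe_biUnion, Set.mem_iUnion]
      exact ⟨j, Finset.mem_range.mpr hjk, hj⟩
  · -- not rapid⁺
    intro hrapid
    -- thresholds from convergence to 0
    have hev : ∀ k : ℕ, ∃ N : ℕ, ∀ n ≥ N, f n < (1 / 2 : ℝ) ^ k := by
      intro k
      have hpow : (0 : ℝ) < (1 / 2 : ℝ) ^ k := pow_pos (by norm_num) k
      have h1 : ∀ᶠ n in Filter.atTop, f n < (1 / 2 : ℝ) ^ k :=
        hlim.eventually (eventually_lt_nhds hpow)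
      obtain ⟨N, hN⟩ := Filter.eventually_atTop.mp h1
      exact ⟨N, hN⟩
    set N : ℕ → ℕ := fun k => (hev k).choose with hNdef
    have hNspec : ∀ k, ∀ n ≥ N k, f n < (1 / 2 : ℝ) ^ k := fun k => (hev k).choose_spec
    set g : ℕ → ℕ := fun k => k + (Finset.range (k + 1)).sup N with hgdef
    have hgmono : StrictMono g := by
      apply strictMono_nat_of_lt_succ
      intro k
      have : (Finset.range (k + 1)).sup N ≤ (Finset.range (k + 1 + 1)).sup N :=
        Finset.sup_mono (Finset.range_subset_range.mpr (by omega))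
      simp only [hgdef]
      omega
    have hgN : ∀ k, N k ≤ g k := by
      intro k
      have : N k ≤ (Finset.range (k + 1)).sup N :=
        Finset.le_sup (Finset.mem_range.mpr (Nat.lt_succ_self k))
      simp only [hgdef]
      omega
    have hunivstat : GStat (summableFilter f) Set.univ := by
      rw [gstat_iff, Set.indicator_univ]
      exact hdiv
    obtain ⟨B, -, hBstat, hBnth⟩ := hrapid Set.univ hunivstat g hgmono
    have hBns : ¬ Summable (B.indicator f) := (gstat_iff f B).mp hBstat
    -- B must be infinite
    have hBinf : (setOf (· ∈ B)).Infinite := by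
      by_contra h
      rw [Set.not_infinite] at h
      apply hBns
      apply summable_of_ne_finset_zero (s := h.toFinset)
      intro b hb
      apply Set.indicator_of_notMem
      intro hbB
      exact hb (h.mem_toFinset.mpr hbB)
    -- but then B.indicator f is summable, contradiction
    apply hBns
    rw [← summable_subtype_iff_indicator]
    have hmem : ∀ n : ℕ, Nat.nth (· ∈ B) n ∈ B := fun n => Nat.nth_mem_of_infinite hBinf n
    set e : ℕ → B := fun n => ⟨Nat.nth (· ∈ B) n, hmem n⟩ with hedef
    have hbij : Function.Bijective e := by
      constructor
      · intro a b hab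
        exact (Nat.nth_injective hBinf) (congrArg Subtype.val hab)
      · rintro ⟨b, hb⟩
        have : b ∈ Set.range (Nat.nth (· ∈ B)) := by
          rw [Nat.range_nth_of_infinite hBinf]
          exact hb
        obtain ⟨n, hn⟩ := this
        exact ⟨n, Subtype.ext hn⟩
    rw [← (Equiv.ofBijective e hbij).summable_iff]
    have hle : ∀ n : ℕ, f (Nat.nth (· ∈ B) n) ≤ (1 / 2 : ℝ) ^ n := by
      intro n
      apply le_of_lt
      apply hNspec n
      exact le_trans (hgN n) (le_trans (hBnth n) le_rfl)
    exact Summable.of_nonneg_of_le (fun n => (hpos _).le) hle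
      (summable_geometric_of_lt_one (by norm_num) (by norm_num))
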